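/- Let x ∼ N(μ e_N, σ² I_N) with μ ≠ 0 and L = D − A the combinatorial Laplacian of a connected graph. Then the expectation of the high-frequency area E[S_high] = E[xᵀLx/xᵀx], when expressed via x̂ = Uᵀx as E[(Σ_{i≥2} λᵢ x̂ᵢ²)/(Σᵢ x̂ᵢ²)], is monotonically increasing in σ/|μ| (it depends on (μ,σ) only through σ/|μ|, and increases as this ratio increases). -/

import Mathlib

open MeasureTheory ProbabilityTheory BigOperators
open Real Set

noncomputable def stdG : Measure ℝ := gaussianReal 0 1

lemma stdG_eq : stdG = volume.withDensity
    (fun x => ((gaussianPDFReal 0 1 x).toNNReal : ENNReal)) := by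
  rw [stdG, gaussianReal_of_var_ne_zero _ one_ne_zero]
  rfl

lemma integral_stdG (f : ℝ → ℝ) :
    ∫ t, f t ∂stdG = ∫ t, gaussianPDFReal 0 1 t * f t := by
  rw [stdG_eq, integral_withDensity_eq_integral_smul
    ((measurable_gaussianPDFReal 0 1).real_toNNReal) f]
  congr 1; ext t
  simp [NNReal.smul_def, Real.coe_toNNReal _ (gaussianPDFReal_nonneg 0 1 t)]

lemma integral_exp_shift_sq {a : ℝ} (c : ℝ) (_ha : 0 < a) :
    ∫ t : ℝ, exp (-(a*(t+c)^2)) = Real.sqrt (π/a) := by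
  rw [integral_add_right_eq_self (fun t => exp (-(a*t^2))) c]
  simp_rw [neg_mul_eq_neg_mul]
  exact integral_gaussian a

lemma gauss_exp {s : ℝ} (r : ℝ) (hs : 0 < s) :
    ∫ t, exp (-(s*(t+r)^2)) ∂stdG
      = (Real.sqrt (2*π))⁻¹ * (Real.sqrt (π/(s+1/2)) * exp (-(s*r^2/(2*s+1)))) := by
  rw [integral_stdG]
  have h1 : (2*s+1) ≠ 0 := by positivity
  have key : ∀ t : ℝ, gaussianPDFReal 0 1 t * exp (-(s*(t+r)^2))
      = (Real.sqrt (2*π))⁻¹ *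
        (exp (-(s*r^2/(2*s+1))) * exp (-((s+1/2)*(t+2*s*r/(2*s+1))^2))) := by
    intro t
    simp only [gaussianPDFReal, NNReal.coe_one, mul_one, sub_zero]
    rw [mul_assoc, ← Real.exp_add, ← Real.exp_add]
    congr 2
    field_simp
    ring
  simp_rw [key]
  rw [integral_const_mul, integral_const_mul, integral_exp_shift_sq _ (by positivity)]
  ring

lemma gauss_exp_mono {s : ℝ} (hs : 0 < s) {r₁ r₂ : ℝ} (h2 : 0 ≤ r₂) (h12 : r₂ ≤ r₁) :
    ∫ t, exp (-(s*(t+r₁)^2)) ∂stdG ≤ ∫ t, exp (-(s*(t+r₂)^2)) ∂stdG := by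
  rw [gauss_exp r₁ hs, gauss_exp r₂ hs]
  have h1 : (0:ℝ) < 2*s+1 := by positivity
  have h : s*r₂^2/(2*s+1) ≤ s*r₁^2/(2*s+1) := by
    gcongr
  gcongr

lemma integral_exp_neg_mul_Ioi_zero {c : ℝ} (hc : 0 < c) :
    ∫ s in Ioi (0:ℝ), exp (-(c*s)) = c⁻¹ := by
  have := integral_comp_mul_left_Ioi (fun x => exp (-x)) 0 hc
  simp only [mul_zero, integral_exp_neg_Ioi, neg_zero, exp_zero, smul_eq_mul, mul_one] at this
  exact this

instance : IsProbabilityMeasure stdG := by rw [stdG]; infer_instance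

lemma layer_rep {c A : ℝ} (hc : 0 < c) (hA : 0 ≤ A) :
    ENNReal.ofReal (A / c) = ∫⁻ s in Ioi (0:ℝ), ENNReal.ofReal (A * exp (-(c*s))) := by
  have h1 : IntegrableOn (fun s : ℝ => exp (-(c*s))) (Ioi 0) := by
    have := exp_neg_integrableOn_Ioi 0 hc
    simpa [neg_mul] using this
  rw [← ofReal_integral_eq_lintegral_ofReal (h1.const_mul A)
    (by filter_upwards with s; positivity)]
  rw [integral_const_mul, integral_exp_neg_mul_Ioi_zero hc, div_eq_mul_inv]

lemma dim1_mono {A B : ℝ} (hA : 0 ≤ A) (hB : 0 < B) {r₁ r₂ : ℝ} (h2 : 0 ≤ r₂)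
    (h12 : r₂ ≤ r₁) :
    ∫ t, A / ((t+r₁)^2 + B) ∂stdG ≤ ∫ t, A / ((t+r₂)^2 + B) ∂stdG := by
  have hpos : ∀ (r t : ℝ), 0 < (t+r)^2 + B := fun r t => by positivity
  have hmeas : ∀ r : ℝ, Measurable fun t : ℝ => A/((t+r)^2+B) := fun r => by fun_prop
  set Φ : ℝ → ENNReal := fun r => ∫⁻ t, ENNReal.ofReal (A / ((t+r)^2+B)) ∂stdG with hΦ
  have hre : ∀ r, ∫ t, A/((t+r)^2+B) ∂stdG = (Φ r).toReal := by
    intro r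
    rw [integral_eq_lintegral_of_nonneg_ae (μ := stdG)
      (ae_of_all _ fun t => div_nonneg hA (hpos r t).le) (hmeas r).aestronglyMeasurable]
  have hrep : ∀ r, Φ r = ∫⁻ s in Ioi (0:ℝ),
      ∫⁻ t, ENNReal.ofReal (A * exp (-(((t+r)^2+B)*s))) ∂stdG := by
    intro r
    have : Φ r = ∫⁻ t, ∫⁻ s in Ioi (0:ℝ),
        ENNReal.ofReal (A * exp (-(((t+r)^2+B)*s))) ∂volume ∂stdG := by
      rw [hΦ]
      exact lintegral_congr fun t => layer_rep (hpos r t) hA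
    rw [this]
    exact lintegral_lintegral_swap (by fun_prop)
  have hinner : ∀ r s : ℝ, 0 < s →
      ∫⁻ t, ENNReal.ofReal (A * exp (-(((t+r)^2+B)*s))) ∂stdG
        = ENNReal.ofReal ((A * exp (-(B*s))) * ∫ t, exp (-(s*(t+r)^2)) ∂stdG) := by
    intro r s hs
    have hid : ∀ t : ℝ, A * exp (-(((t+r)^2+B)*s))
        = (A * exp (-(B*s))) * exp (-(s*(t+r)^2)) := by
      intro t
      rw [mul_assoc, ← Real.exp_add]
      ring_nf
    simp_rw [hid]
    rw [← integral_const_mul, ofReal_integral_eq_lintegral_ofReal]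
    · refine (Integrable.const_mul ?_ _)
      have hm : Measurable fun t : ℝ => exp (-(s*(t+r)^2)) :=
        Real.measurable_exp.comp (by fun_prop)
      refine (integrable_const (1:ℝ)).mono' hm.aestronglyMeasurable ?_
      filter_upwards with t
      rw [Real.norm_eq_abs, abs_of_nonneg (exp_nonneg _)]
      exact Real.exp_le_one_iff.2 (neg_nonpos.2 (by positivity))
    · filter_upwards with t
      positivity
  have hmono : Φ r₁ ≤ Φ r₂ := by
    rw [hrep r₁, hrep r₂]
    refine lintegral_mono_ae ?_
    filter_upwards [ae_restrict_mem measurableSet_Ioi] with s hs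
    rw [hinner r₁ s hs, hinner r₂ s hs]
    refine ENNReal.ofReal_le_ofReal ?_
    exact mul_le_mul_of_nonneg_left (gauss_exp_mono hs h2 h12) (by positivity)
  have hfin : Φ r₂ ≠ ⊤ := by
    have hb : Φ r₂ ≤ ENNReal.ofReal (A/B) := by
      have : Φ r₂ ≤ ∫⁻ _, ENNReal.ofReal (A/B) ∂stdG := by
        refine lintegral_mono fun t => ENNReal.ofReal_le_ofReal ?_
        have hle : B ≤ (t+r₂)^2 + B := le_add_of_nonneg_left (sq_nonneg _)
        gcongr
      simpa using this
    exact ne_top_of_le_ne_top ENNReal.ofReal_ne_top hb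
  rw [hre r₁, hre r₂]
  exact ENNReal.toReal_mono hfin hmono

lemma pi_map {n : ℕ} (μ : Fin n → Measure ℝ) [∀ i, IsProbabilityMeasure (μ i)]
    (f : Fin n → ℝ → ℝ) (hf : ∀ i, Measurable (f i)) :
    Measure.pi (fun i => (μ i).map (f i)) = (Measure.pi μ).map (fun x i => f i (x i)) := by
  haveI : ∀ i, IsProbabilityMeasure ((μ i).map (f i)) :=
    fun i => Measure.isProbabilityMeasure_map (hf i).aemeasurable
  refine (Measure.pi_eq (μ := fun i => (μ i).map (f i)) fun s hs => ?_)
  have hT : Measurable fun (x : Fin n → ℝ) (i : Fin n) => f i (x i) :=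
    measurable_pi_iff.2 fun i => (hf i).comp (measurable_pi_apply i)
  rw [Measure.map_apply hT (MeasurableSet.univ_pi hs)]
  have hpre : (fun (x : Fin n → ℝ) i => f i (x i)) ⁻¹' (univ.pi s)
      = univ.pi (fun i => f i ⁻¹' s i) := by
    ext x; simp [Set.mem_pi]
  rw [hpre, Measure.pi_pi]
  exact Finset.prod_congr rfl fun i _ => (Measure.map_apply (hf i) (hs i)).symm

noncomputable def piG (n : ℕ) (r : ℝ) : Measure (Fin (n+1) → ℝ) :=
  Measure.pi (fun i => gaussianReal (if i = 0 then r else 0) 1)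

instance (n : ℕ) (r : ℝ) : IsProbabilityMeasure (piG n r) := by
  rw [piG]; infer_instance

lemma G_mono {n : ℕ} (lam : Fin (n+1) → ℝ) (hlam0 : lam 0 = 0) (hnn : ∀ i, 0 ≤ lam i)
    {r₁ r₂ : ℝ} (h2 : 0 ≤ r₂) (h12 : r₂ ≤ r₁) :
    ∫ y, (∑ i, lam i * (y i)^2)/(∑ i, (y i)^2) ∂(piG n r₁)
      ≤ ∫ y, (∑ i, lam i * (y i)^2)/(∑ i, (y i)^2) ∂(piG n r₂) := by
  set C : ℝ := ∑ i, lam i with hC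
  have hC0 : 0 ≤ C := Finset.sum_nonneg fun i _ => hnn i
  have hlamC : ∀ i, lam i ≤ C :=
    fun i => Finset.single_le_sum (fun j _ => hnn j) (Finset.mem_univ i)
  set h : (Fin (n+1) → ℝ) → ℝ := fun y => (∑ i, lam i * (y i)^2)/(∑ i, (y i)^2) with hh
  have hmeas : Measurable h := by
    apply Measurable.div <;> exact Finset.measurable_sum _ fun i _ => by fun_prop
  have hhnn : ∀ y, 0 ≤ h y := fun y => div_nonneg
    (Finset.sum_nonneg fun i _ => mul_nonneg (hnn i) (sq_nonneg _))
    (Finset.sum_nonneg fun i _ => sq_nonneg _)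
  have hhle : ∀ y, h y ≤ C := by
    intro y
    rcases eq_or_lt_of_le (Finset.sum_nonneg fun i (_ : i ∈ Finset.univ) =>
      sq_nonneg (y i)) with hz | hz
    · rw [hh]
      simp only [← hz, div_zero]
      exact hC0
    · rw [hh, div_le_iff₀ hz, Finset.mul_sum]
      exact Finset.sum_le_sum fun i _ =>
        mul_le_mul_of_nonneg_right (hlamC i) (sq_nonneg _)
  set e := MeasurableEquiv.piFinSuccAbove (fun _ : Fin (n+1) => ℝ) 0 with he
  have hmp : ∀ r : ℝ, MeasurePreserving e (piG n r)
      ((gaussianReal r 1).prod (Measure.pi fun _ : Fin n => gaussianReal 0 1)) := by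
    intro r
    have h0 : (fun j : Fin n =>
        gaussianReal (if (0:Fin (n+1)).succAbove j = 0 then r else 0) 1)
        = fun _ => gaussianReal 0 1 :=
      funext fun j => by rw [if_neg (Fin.succAbove_ne 0 j)]
    have := measurePreserving_piFinSuccAbove
      (fun i : Fin (n+1) => gaussianReal (if i = 0 then r else 0) 1) 0
    rw [h0] at this
    simpa [piG, he] using this
  have hprod : ∀ r : ℝ, ∫ y, h y ∂(piG n r) = ∫ z, h (e.symm z)
      ∂((gaussianReal r 1).prod (Measure.pi fun _ : Fin n => gaussianReal 0 1)) := by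
    intro r
    calc ∫ y, h y ∂(piG n r) = ∫ x, h (e.symm (e x)) ∂(piG n r) := by simp
      _ = _ := (hmp r).integral_comp' (fun z => h (e.symm z))
  have hsymm : ∀ (t : ℝ) (w : Fin n → ℝ), h (e.symm (t, w))
      = (∑ j, lam (Fin.succ j) * (w j)^2) / (t^2 + ∑ j, (w j)^2) := by
    intro t w
    have hy : (e.symm (t, w) : Fin (n+1) → ℝ) = Fin.cons t w := by
      simp [he, MeasurableEquiv.piFinSuccAbove, Fin.consEquiv]
    rw [hh]
    simp only [hy]
    simp [Fin.sum_univ_succ, hlam0]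
  have hint : ∀ r : ℝ, Integrable (fun z : ℝ × (Fin n → ℝ) => h (e.symm z))
      ((gaussianReal r 1).prod (Measure.pi fun _ : Fin n => gaussianReal 0 1)) := by
    intro r
    refine (integrable_const C).mono'
      (hmeas.comp e.symm.measurable).aestronglyMeasurable ?_
    filter_upwards with z
    rw [Real.norm_eq_abs, abs_of_nonneg (hhnn _)]
    exact hhle _
  have hiter : ∀ r : ℝ, ∫ y, h y ∂(piG n r) = ∫ w, ∫ t, h (e.symm (t, w))
      ∂(gaussianReal r 1) ∂(Measure.pi fun _ : Fin n => gaussianReal 0 1) := by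
    intro r
    rw [hprod r, integral_prod_symm _ (hint r)]
  show (∫ y, h y ∂(piG n r₁)) ≤ ∫ y, h y ∂(piG n r₂)
  rw [hiter r₁, hiter r₂]
  refine integral_mono ((hint r₁).integral_prod_right) ((hint r₂).integral_prod_right)
    fun w => ?_
  simp only [hsymm]
  set A := ∑ j, lam (Fin.succ j) * (w j)^2 with hA
  set B := ∑ j, (w j)^2 with hB
  have hA0 : 0 ≤ A := Finset.sum_nonneg fun j _ => mul_nonneg (hnn _) (sq_nonneg _)
  have hB0 : 0 ≤ B := Finset.sum_nonneg fun j _ => sq_nonneg _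
  rcases eq_or_lt_of_le hB0 with hz | hz
  · have hw : ∀ j, (w j)^2 = 0 := by
      intro j
      have := (Finset.sum_eq_zero_iff_of_nonneg
        (fun j (_ : j ∈ Finset.univ) => sq_nonneg (w j))).1 hz.symm
      exact this j (Finset.mem_univ j)
    have hAz : A = 0 := by
      rw [hA]
      exact Finset.sum_eq_zero fun j _ => by rw [hw j, mul_zero]
    simp [hAz]
  · have htr : ∀ r : ℝ, ∫ t, A/(t^2+B) ∂(gaussianReal r 1)
        = ∫ t, A/((t+r)^2+B) ∂stdG := by
      intro r
      have hmap : gaussianReal r 1 = stdG.map (· + r) := by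
        rw [stdG, gaussianReal_map_add_const, zero_add]
      have hfm : Measurable fun t : ℝ => A/(t^2+B) := by fun_prop
      rw [hmap, integral_map (by fun_prop) hfm.aestronglyMeasurable]
    rw [htr r₁, htr r₂]
    exact dim1_mono hA0 hz h2 h12

lemma piG_scale {n : ℕ} {σ : ℝ} (m : Fin (n+1) → ℝ) :
    Measure.pi (fun i => gaussianReal (σ * m i) (⟨σ^2, sq_nonneg σ⟩ : NNReal)) =
      (Measure.pi fun i => gaussianReal (m i) 1).map (fun x i => σ * x i) := by
  have heq : ∀ i : Fin (n+1), gaussianReal (σ * m i) (⟨σ^2, sq_nonneg σ⟩ : NNReal)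
      = (gaussianReal (m i) 1).map (σ * ·) := by
    intro i
    rw [gaussianReal_map_const_mul σ, mul_one]
    rfl
  calc Measure.pi (fun i => gaussianReal (σ * m i) (⟨σ^2, sq_nonneg σ⟩ : NNReal))
      = Measure.pi (fun i => (gaussianReal (m i) 1).map (σ * ·)) := by rw [funext heq]
    _ = _ := pi_map _ _ (fun i => by fun_prop)

lemma G_even {n : ℕ} (lam : Fin (n+1) → ℝ) (r : ℝ) :
    ∫ y, (∑ i, lam i * (y i)^2)/(∑ i, (y i)^2) ∂(piG n (-r))
      = ∫ y, (∑ i, lam i * (y i)^2)/(∑ i, (y i)^2) ∂(piG n r) := by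
  set c : Fin (n+1) → ℝ := fun i => if i = 0 then (-1:ℝ) else 1 with hc
  have hc2 : ∀ (i : Fin (n+1)) (x : ℝ), (c i * x)^2 = x^2 := by
    intro i x
    by_cases hi : i = 0 <;> simp [hc, hi, mul_pow, neg_one_sq]
  have hmap : piG n (-r) = (piG n r).map (fun x i => c i * x i) := by
    rw [piG, piG]
    have heq : ∀ i : Fin (n+1), gaussianReal (if i = 0 then -r else 0) 1
        = (gaussianReal (if i = 0 then r else 0) 1).map (c i * ·) := by
      intro i
      rw [gaussianReal_map_const_mul (c i)]
      congr 1
      · by_cases hi : i = 0 <;> simp [hc, hi]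
      · ext
        by_cases hi : i = 0 <;> simp [hc, hi] <;> norm_num
    calc Measure.pi (fun i => gaussianReal (if i = 0 then -r else 0) 1)
        = Measure.pi (fun i => (gaussianReal (if i = 0 then r else 0) 1).map (c i * ·)) := by
          rw [funext heq]
      _ = _ := pi_map _ _ (fun i => by fun_prop)
  have hmeas : Measurable fun y : Fin (n+1) → ℝ => (∑ i, lam i * (y i)^2)/(∑ i, (y i)^2) := by
    apply Measurable.div <;> exact Finset.measurable_sum _ fun i _ => by fun_prop
  rw [hmap, integral_map (measurable_pi_iff.2 fun i =>
    (measurable_pi_apply i).const_mul (c i)).aemeasurable hmeas.aestronglyMeasurable]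
  refine integral_congr_ae (ae_of_all _ fun x => ?_)
  simp only [hc2]


/-- Let `L = D - A = U Λ Uᵀ` be the Laplacian of a connected graph, with eigenvalues
`0 = λ₁ < λ₂ ≤ ⋯ ≤ λ_N`. For `x ∼ N(μ e_N, σ² I_N)` with `μ ≠ 0`, after rotation the
coordinates satisfy `x̂ 0 ∼ N(μ√N, σ²)` and `x̂ i ∼ N(0, σ²)` independently, so
`E[S_high] = E[(∑_{i≥2} λᵢ x̂ᵢ²)/(∑ᵢ x̂ᵢ²)]` is given by the integral `F μ σ` below. This
expectation depends on `(μ,σ)` only through `σ/|μ|` and is monotonically increasing in the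
anomaly degree `σ/|μ|`. -/
theorem expected_high_frequency_area_monotone
    {N : ℕ} (hN : 0 < N)
    (lam : Fin N → ℝ) (hlam0 : lam ⟨0, hN⟩ = 0)
    (hlampos : ∀ i : Fin N, i ≠ ⟨0, hN⟩ → 0 < lam i)
    (hmono : Monotone lam)
    (F : ℝ → NNReal → ℝ)
    (hF : ∀ (μ : ℝ) (σ : NNReal), F μ σ =
      ∫ y : Fin N → ℝ,
        (∑ i, lam i * (y i) ^ 2) / (∑ i, (y i) ^ 2)
      ∂(Measure.pi fun i : Fin N =>
          if i = ⟨0, hN⟩ then gaussianReal (μ * Real.sqrt N) (σ ^ 2)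
          else gaussianReal 0 (σ ^ 2))) :
    ∀ (μ₁ μ₂ : ℝ) (σ₁ σ₂ : NNReal), μ₁ ≠ 0 → μ₂ ≠ 0 → 0 < σ₁ → 0 < σ₂ →
      (σ₁ : ℝ) / |μ₁| ≤ (σ₂ : ℝ) / |μ₂| → F μ₁ σ₁ ≤ F μ₂ σ₂ := by
  obtain ⟨n, rfl⟩ : ∃ n, N = n + 1 := ⟨N - 1, (Nat.succ_pred_eq_of_pos hN).symm⟩
  intro μ₁ μ₂ σ₁ σ₂ hμ₁ hμ₂ hσ₁ hσ₂ hle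
  have h00 : (⟨0, hN⟩ : Fin (n+1)) = 0 := rfl
  have hnn : ∀ i, 0 ≤ lam i := by
    intro i
    by_cases hi : i = ⟨0, hN⟩
    · rw [hi, hlam0]
    · exact (hlampos i hi).le
  have hlam0' : lam 0 = 0 := h00 ▸ hlam0
  set s : ℝ := Real.sqrt ((n+1 : ℕ) : ℝ) with hs
  have hs0 : 0 ≤ s := Real.sqrt_nonneg _
  set I : ℝ → ℝ := fun r =>
    ∫ y, (∑ i, lam i * (y i)^2)/(∑ i, (y i)^2) ∂(piG n r) with hI
  have hmeas : Measurable fun y : Fin (n+1) → ℝ =>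
      (∑ i, lam i * (y i)^2)/(∑ i, (y i)^2) := by
    apply Measurable.div <;> exact Finset.measurable_sum _ fun i _ => by fun_prop
  have key : ∀ (μ : ℝ) (σ : NNReal), 0 < σ → F μ σ = I (μ * s / σ) := by
    intro μ σ hσ
    have hσ0 : (σ:ℝ) ≠ 0 := (NNReal.coe_pos.2 hσ).ne'
    set r : ℝ := μ * s / σ with hr
    have hmeaseq : (fun i : Fin (n+1) => if i = ⟨0, hN⟩ then
          gaussianReal (μ * Real.sqrt ((n+1:ℕ):ℝ)) (σ^2) else gaussianReal 0 (σ^2))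
        = fun i => gaussianReal ((σ:ℝ) * (if i = 0 then r else 0))
            (⟨(σ:ℝ)^2, sq_nonneg _⟩ : NNReal) := by
      funext i
      simp only [h00]
      by_cases hi : i = 0
      · rw [if_pos hi, if_pos hi]
        congr 1
        rw [hr, ← hs]
        field_simp
      · rw [if_neg hi, if_neg hi, mul_zero]
        congr 1
    rw [hF, hmeaseq, piG_scale (fun i => if i = 0 then r else 0)]
    rw [integral_map (measurable_pi_iff.2 fun i =>
      (measurable_pi_apply i).const_mul _).aemeasurable hmeas.aestronglyMeasurable]
    refine integral_congr_ae (ae_of_all _ fun y => ?_)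
    have h1 : ∑ i, lam i * ((σ:ℝ) * y i)^2 = (σ:ℝ)^2 * ∑ i, lam i * (y i)^2 := by
      rw [Finset.mul_sum]
      exact Finset.sum_congr rfl fun i _ => by ring
    have h2 : ∑ i, ((σ:ℝ) * y i)^2 = (σ:ℝ)^2 * ∑ i, (y i)^2 := by
      rw [Finset.mul_sum]
      exact Finset.sum_congr rfl fun i _ => by ring
    show (∑ i, lam i * ((σ:ℝ) * y i)^2)/(∑ i, ((σ:ℝ) * y i)^2)
        = (∑ i, lam i * (y i)^2)/(∑ i, (y i)^2)
    rw [h1, h2, mul_div_mul_left _ _ (pow_ne_zero 2 hσ0)]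
  have habs : ∀ r : ℝ, I r = I |r| := by
    intro r
    rcases abs_cases r with ⟨hr, _⟩ | ⟨hr, _⟩
    · rw [hr]
    · rw [hr]
      exact (G_even lam r).symm
  have hσ₁' : (0:ℝ) < σ₁ := NNReal.coe_pos.2 hσ₁
  have hσ₂' : (0:ℝ) < σ₂ := NNReal.coe_pos.2 hσ₂
  have hab₁ : (0:ℝ) < |μ₁| := abs_pos.2 hμ₁
  have hab₂ : (0:ℝ) < |μ₂| := abs_pos.2 hμ₂
  have h1 : |μ₂| / σ₂ ≤ |μ₁| / σ₁ := by
    rw [div_le_div_iff₀ hab₁ hab₂] at hle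
    rw [div_le_div_iff₀ hσ₂' hσ₁']
    rw [mul_comm |μ₂| ((σ₁:ℝ)), mul_comm |μ₁| ((σ₂:ℝ))]
    exact hle
  have habs1 : ∀ (μ : ℝ) (σ : NNReal), 0 < σ → |μ * s / σ| = |μ| * s / σ := by
    intro μ σ hσ
    rw [abs_div, abs_mul, abs_of_nonneg hs0, abs_of_pos (NNReal.coe_pos.2 hσ)]
  have hord : |μ₂ * s / σ₂| ≤ |μ₁ * s / σ₁| := by
    rw [habs1 μ₁ σ₁ hσ₁, habs1 μ₂ σ₂ hσ₂]
    calc |μ₂| * s / σ₂ = (|μ₂|/σ₂) * s := by ring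
      _ ≤ (|μ₁|/σ₁) * s := mul_le_mul_of_nonneg_right h1 hs0
      _ = |μ₁| * s / σ₁ := by ring
  rw [key μ₁ σ₁ hσ₁, key μ₂ σ₂ hσ₂, habs (μ₁ * s / σ₁), habs (μ₂ * s / σ₂)]
  exact G_mono lam hlam0' hnn (abs_nonneg _) hord
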